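/- The function g(h) = (√(e^{4h}+4e^{2h}) − e^{2h})/2 satisfies the differential identity g′(h) = 2·g(h)·(1−g(h))/(2−g(h)) for all h ∈ ℝ. -/

import Mathlib

noncomputable def gH (h : ℝ) : ℝ :=
  (Real.sqrt (Real.exp (4 * h) + 4 * Real.exp (2 * h)) - Real.exp (2 * h)) / 2

/-- `g′(h) = 2·g(h)·(1−g(h))/(2−g(h))` for all `h ∈ ℝ`. -/
theorem stmt11 (h : ℝ) :
    HasDerivAt gH (2 * gH h * (1 - gH h) / (2 - gH h)) h := by
  have hu : (0:ℝ) < Real.exp (2 * h) := Real.exp_pos _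
  have hin : (0:ℝ) < Real.exp (4 * h) + 4 * Real.exp (2 * h) := by positivity
  have h4 : HasDerivAt (fun x : ℝ => Real.exp (4 * x)) (Real.exp (4 * h) * 4) h := by
    simpa using ((hasDerivAt_id h).const_mul (4:ℝ)).exp
  have h2 : HasDerivAt (fun x : ℝ => Real.exp (2 * x)) (Real.exp (2 * h) * 2) h := by
    simpa using ((hasDerivAt_id h).const_mul (2:ℝ)).exp
  have hinner : HasDerivAt (fun x : ℝ => Real.exp (4 * x) + 4 * Real.exp (2 * x))
      (Real.exp (4 * h) * 4 + 4 * (Real.exp (2 * h) * 2)) h := h4.add (h2.const_mul 4)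
  have hsqrt := hinner.sqrt (ne_of_gt hin)
  have hmain := (hsqrt.sub h2).div_const 2
  convert hmain using 1
  case e'_4 => rfl
  case e'_5 => rfl
  case e'_8 => rfl
  set s := Real.sqrt (Real.exp (4 * h) + 4 * Real.exp (2 * h)) with hs
  have hspos : 0 < s := Real.sqrt_pos.mpr hin
  have hs2 : s ^ 2 = Real.exp (4 * h) + 4 * Real.exp (2 * h) := Real.sq_sqrt hin.le
  have hexp : Real.exp (4 * h) = Real.exp (2 * h) ^ 2 := by
    rw [show (4:ℝ) * h = 2 * h + 2 * h by ring, Real.exp_add]; ring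
  set u := Real.exp (2 * h) with hudef
  -- g in (0,1) so 2 - g ≠ 0
  have hgub : s < u + 2 := by
    nlinarith [hs2, hexp, hspos, hu]
  have hglb : u < s := by
    nlinarith [hs2, hexp, hspos, hu]
  have hne : 2 - gH h ≠ 0 := by
    simp only [gH, ← hs, ← hudef]
    intro hcon
    nlinarith [hgub]
  simp only [gH, ← hs, ← hudef] at hne ⊢
  rw [hexp] at hs2 ⊢
  have hne4 : (4:ℝ) - (s - u) ≠ 0 := by intro hc; apply hne; linarith
  rw [div_eq_div_iff (by intro hc; apply hne; linarith) (by norm_num : (2:ℝ) ≠ 0)]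
  field_simp
  nlinarith [hs2, hspos, hu, sq_nonneg (s - u), sq_nonneg s, mul_pos hspos hu]
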